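/- For every integer n > 1 and every α ∈ (0,1), ex_T(n+1, α) ≤ ex_T(n, α); that is, ex_T(n, α) is non-increasing in n. -/

import Mathlib

open Filter MeasureTheory Pointwise

abbrev 𝕋 : Type := AddCircle (1 : ℝ)

/-- Projection `𝕋^{n+1} → 𝕋^n` forgetting the first coordinate. -/
def projFirst (n : ℕ) (x : Fin (n + 1) → 𝕋) (i : Fin n) : 𝕋 := x i.succ

/-- Projection `𝕋^{n+1} → 𝕋^n` forgetting the last coordinate. -/
def projLast (n : ℕ) (x : Fin (n + 1) → 𝕋) (i : Fin n) : 𝕋 := x i.castSucc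

/-- Auxiliary: `exTdim m α` is the infimum of `μ(π₁(B) + π_{m+1}(B))` over open sets
`B ⊆ 𝕋^{m+1}` with `μ(B) > α`. -/
noncomputable def exTdim (m : ℕ) (α : ℝ) : ℝ :=
  sInf {x : ℝ | ∃ B : Set (Fin (m + 1) → 𝕋), IsOpen B ∧ α < (volume B).toReal ∧
    x = (volume (projFirst m '' B + projLast m '' B)).toReal}

/-- `exT n α` is the paper's `ex_T(n, α)`, meaningful for `n ≥ 2`. -/
noncomputable def exT (n : ℕ) (α : ℝ) : ℝ := exTdim (n - 1) α

/-- `exT(α) = lim_{n→∞} ex_T(n, α)`; since `ex_T(n, α)` is non-increasing in `n` and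
bounded below, this limit equals the infimum. -/
noncomputable def exTlim (α : ℝ) : ℝ := ⨅ n : ℕ, exT (n + 2) α

instance : IsProbabilityMeasure (volume : Measure 𝕋) :=
  ⟨by simp [AddCircle.measure_univ]⟩

lemma measurePreserving_projLast (k : ℕ) :
    MeasurePreserving (projLast k) (volume : Measure (Fin (k+1) → 𝕋)) volume := by
  have h1 := MeasureTheory.volume_preserving_piFinSuccAbove (fun _ : Fin (k+1) => 𝕋) (Fin.last k)
  have h2 : MeasurePreserving (Prod.snd : 𝕋 × (Fin k → 𝕋) → (Fin k → 𝕋)) volume volume :=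
    ⟨measurable_snd, by
      show Measure.map Prod.snd (volume.prod volume) = volume
      simp [Measure.map_snd_prod]⟩
  have h3 := h2.comp h1
  convert h3 using 1
  · rfl
  funext x i
  simp [projLast, MeasurableEquiv.piFinSuccAbove, Fin.succAbove_last, Fin.init]

lemma projLast_comp_projFirst (m : ℕ) (x : Fin (m + 2) → 𝕋) :
    projLast m (projFirst (m + 1) x) = projFirst m (projLast (m + 1) x) := by
  funext i
  simp [projLast, projFirst]

/-- general preimage inequality for measure preserving maps -/
lemma mp_measure_preimage_le {X Y : Type*} [MeasurableSpace X] [MeasurableSpace Y]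
    {μ : Measure X} {ν : Measure Y} {f : X → Y} (hf : MeasurePreserving f μ ν)
    (s : Set Y) : μ (f ⁻¹' s) ≤ ν s := by
  calc μ (f ⁻¹' s) ≤ μ (f ⁻¹' (toMeasurable ν s)) :=
        measure_mono (Set.preimage_mono (subset_toMeasurable ν s))
    _ = ν (toMeasurable ν s) :=
        hf.measure_preimage (measurableSet_toMeasurable ν s).nullMeasurableSet
    _ = ν s := measure_toMeasurable s

lemma exTdim_succ_le (m : ℕ) (α : ℝ) (hα1 : α < 1) :
    exTdim (m + 1) α ≤ exTdim m α := by
  have hbdd : ∀ k, BddBelow {x : ℝ | ∃ B : Set (Fin (k + 1) → 𝕋), IsOpen B ∧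
      α < (volume B).toReal ∧
      x = (volume (projFirst k '' B + projLast k '' B)).toReal} := by
    intro k
    refine ⟨0, fun x hx => ?_⟩
    obtain ⟨B, -, -, rfl⟩ := hx
    exact ENNReal.toReal_nonneg
  refine le_csInf ⟨(volume (projFirst m '' (Set.univ : Set (Fin (m+1) → 𝕋)) +
      projLast m '' Set.univ)).toReal, Set.univ, isOpen_univ, by simp [hα1], rfl⟩ ?_
  rintro x ⟨B, hBopen, hBvol, rfl⟩
  -- construct the lifted set B' in dimension m+2
  set B' : Set (Fin (m + 2) → 𝕋) := projLast (m + 1) ⁻¹' B with hB'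
  have hmp := measurePreserving_projLast (m + 1)
  have hB'open : IsOpen B' := hBopen.preimage (by
    exact continuous_pi fun i => continuous_apply _)
  have hB'vol : volume B' = volume B :=
    hmp.measure_preimage hBopen.measurableSet.nullMeasurableSet
  -- the sum set in dimension m+1
  set S : Set (Fin m → 𝕋) := projFirst m '' B + projLast m '' B with hS
  -- key inclusion
  have hincl : projFirst (m + 1) '' B' + projLast (m + 1) '' B' ⊆ projLast m ⁻¹' S := by
    rintro z ⟨y₁, ⟨x₁, hx₁, rfl⟩, y₂, ⟨x₂, hx₂, rfl⟩, rfl⟩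
    show projLast m (projFirst (m+1) x₁ + projLast (m+1) x₂) ∈ S
    have hadd : projLast m (projFirst (m+1) x₁ + projLast (m+1) x₂)
        = projLast m (projFirst (m+1) x₁) + projLast m (projLast (m+1) x₂) := rfl
    rw [hadd, projLast_comp_projFirst]
    exact Set.add_mem_add ⟨projLast (m+1) x₁, hx₁, rfl⟩
      ⟨projLast (m+1) x₂, hx₂, rfl⟩
  have hvol_le : volume (projFirst (m + 1) '' B' + projLast (m + 1) '' B') ≤ volume S :=
    le_trans (measure_mono hincl) (mp_measure_preimage_le (measurePreserving_projLast m) S)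
  have hSfin : volume S ≠ ⊤ := measure_ne_top _ _
  calc exTdim (m + 1) α
      ≤ (volume (projFirst (m + 1) '' B' + projLast (m + 1) '' B')).toReal := by
        refine csInf_le (hbdd (m + 1)) ?_
        exact ⟨B', hB'open, by rwa [hB'vol], rfl⟩
    _ ≤ (volume S).toReal := ENNReal.toReal_mono hSfin hvol_le

/-- For every integer `n > 1` and every `α ∈ (0,1)`, `ex_T(n+1, α) ≤ ex_T(n, α)`;
that is, `ex_T(n, α)` is non-increasing in `n`. -/
theorem exT_antitone :
    ∀ n : ℕ, 1 < n → ∀ α : ℝ, 0 < α → α < 1 → exT (n + 1) α ≤ exT n α := by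
  intro n hn α hα0 hα1
  obtain ⟨m, rfl⟩ : ∃ m, n = m + 2 := ⟨n - 2, by omega⟩
  show exTdim (m + 3 - 1) α ≤ exTdim (m + 2 - 1) α
  exact exTdim_succ_le (m + 1) α hα1
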